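/- In a locally compact group G with closed subgroup H commensurated by a compact subgroup K, for each n ≥ 1 the set Ω_n = {u ∈ K : |H : H ∩ uHu⁻¹| ≤ n and |H : H ∩ u⁻¹Hu| ≤ n} is closed in K. -/

import Mathlib

def conjS {G : Type*} [Group G] (g : G) (H : Subgroup G) : Subgroup G :=
  H.map (MulAut.conj g).toMonoidHom

lemma index_pigeon {Γ : Type*} [Group Γ] (S : Subgroup Γ) (n : ℕ) :
    (S.index ≠ 0 ∧ S.index ≤ n) ↔
      ∀ f : Fin (n + 1) → Γ, ∃ i j, i ≠ j ∧ (f i)⁻¹ * f j ∈ S := by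
  rw [Subgroup.index]
  constructor
  · rintro ⟨h0, hle⟩ f
    have : Finite (Γ ⧸ S) := Nat.finite_of_card_ne_zero h0
    have hni : ¬ Function.Injective (fun i : Fin (n+1) => ((f i : Γ) : Γ ⧸ S)) := by
      intro hinj
      have h1 := Nat.card_le_card_of_injective _ hinj
      simp [Nat.card_eq_fintype_card] at h1
      omega
    rw [Function.not_injective_iff] at hni
    obtain ⟨i, j, hq, hne⟩ := hni
    exact ⟨i, j, hne, (QuotientGroup.eq).mp hq⟩
  · intro hf
    by_contra hcon
    have hinj : ∃ q : Fin (n + 1) → Γ ⧸ S, Function.Injective q := by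
      rcases eq_or_ne (Nat.card (Γ ⧸ S)) 0 with h0 | h0
      · have : Infinite (Γ ⧸ S) := by
          rcases Nat.card_eq_zero.mp h0 with h | h
          · exact (h.false (QuotientGroup.mk (1 : Γ))).elim
          · exact h
        exact ⟨fun i => Infinite.natEmbedding _ i.val,
          (Infinite.natEmbedding _).injective.comp Fin.val_injective⟩
      · have hfin : Finite (Γ ⧸ S) := Nat.finite_of_card_ne_zero h0
        have hc : n < Nat.card (Γ ⧸ S) := by
          by_contra h
          exact hcon ⟨h0, by omega⟩
        have : Fintype (Γ ⧸ S) := Fintype.ofFinite _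
        obtain ⟨e⟩ := Function.Embedding.nonempty_of_card_le
          (α := Fin (n+1)) (β := Γ ⧸ S) (by simpa [Nat.card_eq_fintype_card] using hc)
        exact ⟨e, e.injective⟩
    obtain ⟨q, hq⟩ := hinj
    obtain ⟨i, j, hne, hmem⟩ := hf fun i => Quotient.out (q i)
    exact hne (hq (by
      rw [← QuotientGroup.out_eq' (q i), ← QuotientGroup.out_eq' (q j)]
      exact QuotientGroup.eq.mpr hmem))

lemma mem_conjS {G : Type*} [Group G] {u g : G} {H : Subgroup G} :
    g ∈ conjS u H ↔ u⁻¹ * g * u ∈ H := by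
  rw [show conjS u H = H.map ((MulAut.conj u) : G ≃* G).toMonoidHom from rfl,
    Subgroup.mem_map_equiv]
  simp [MulAut.conj, mul_assoc]

lemma relindex_pigeon {G : Type*} [Group G] (H : Subgroup G) (u : G) (n : ℕ) :
    ((H ⊓ conjS u H).relIndex H ≠ 0 ∧ (H ⊓ conjS u H).relIndex H ≤ n) ↔
      ∀ f : Fin (n + 1) → H, ∃ i j, i ≠ j ∧
        u⁻¹ * (((f i : G))⁻¹ * (f j : G)) * u ∈ H := by
  rw [Subgroup.relIndex, index_pigeon]
  apply forall_congr'
  intro f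
  apply exists_congr; intro i; apply exists_congr; intro j
  apply and_congr_right'
  rw [Subgroup.mem_subgroupOf]
  simp only [Subgroup.coe_mul, Subgroup.coe_inv, Subgroup.mem_inf, mem_conjS]
  constructor
  · rintro ⟨-, h⟩; exact h
  · intro h; exact ⟨mul_mem (inv_mem (f i).2) (f j).2, h⟩

theorem stmt_6 {G : Type*} [Group G] [TopologicalSpace G] [IsTopologicalGroup G]
    [LocallyCompactSpace G] [T2Space G]
    (H K : Subgroup G) (hH : IsClosed (H : Set G)) (hK : IsCompact (K : Set G))
    (hcomm : ∀ u ∈ K, (H ⊓ conjS u H).relIndex H ≠ 0 ∧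
      (H ⊓ conjS u⁻¹ H).relIndex H ≠ 0)
    (n : ℕ) (hn : 1 ≤ n) :
    IsClosed {u : G | u ∈ K ∧ (H ⊓ conjS u H).relIndex H ≤ n ∧
      (H ⊓ conjS u⁻¹ H).relIndex H ≤ n} := by
  have hset : {u : G | u ∈ K ∧ (H ⊓ conjS u H).relIndex H ≤ n ∧
      (H ⊓ conjS u⁻¹ H).relIndex H ≤ n} =
      (K : Set G) ∩
      ((⋂ f : Fin (n + 1) → H, ⋃ i, ⋃ j, ⋃ (_ : i ≠ j),
        {u : G | u⁻¹ * (((f i : G))⁻¹ * (f j : G)) * u ∈ H}) ∩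
       (⋂ f : Fin (n + 1) → H, ⋃ i, ⋃ j, ⋃ (_ : i ≠ j),
        {u : G | (u⁻¹)⁻¹ * (((f i : G))⁻¹ * (f j : G)) * u⁻¹ ∈ H})) := by
    ext u
    simp only [Set.mem_setOf_eq, Set.mem_inter_iff, SetLike.mem_coe, Set.mem_iInter,
      Set.mem_iUnion]
    constructor
    · rintro ⟨huK, h1, h2⟩
      refine ⟨huK, ?_, ?_⟩
      · intro f
        obtain ⟨i, j, hij, hm⟩ := (relindex_pigeon H u n).mp ⟨(hcomm u huK).1, h1⟩ f
        exact ⟨i, j, hij, hm⟩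
      · intro f
        obtain ⟨i, j, hij, hm⟩ := (relindex_pigeon H u⁻¹ n).mp ⟨(hcomm u huK).2, h2⟩ f
        exact ⟨i, j, hij, hm⟩
    · rintro ⟨huK, h1, h2⟩
      refine ⟨huK, ?_, ?_⟩
      · exact ((relindex_pigeon H u n).mpr (fun f => by
          obtain ⟨i, j, hij, hm⟩ := h1 f; exact ⟨i, j, hij, hm⟩)).2
      · exact ((relindex_pigeon H u⁻¹ n).mpr (fun f => by
          obtain ⟨i, j, hij, hm⟩ := h2 f; exact ⟨i, j, hij, hm⟩)).2
  rw [hset]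
  have hc1 : ∀ (a : G), IsClosed {u : G | u⁻¹ * a * u ∈ H} :=
    fun a => hH.preimage (by continuity)
  have hc2 : ∀ (a : G), IsClosed {u : G | (u⁻¹)⁻¹ * a * u⁻¹ ∈ H} :=
    fun a => hH.preimage (by continuity)
  refine (hK.isClosed).inter (IsClosed.inter ?_ ?_) <;>
    refine isClosed_iInter fun f => ?_ <;>
    refine isClosed_iUnion_of_finite fun i => ?_ <;>
    refine isClosed_iUnion_of_finite fun j => ?_ <;>
    refine isClosed_iUnion_of_finite fun _ => ?_
  · exact hc1 _
  · exact hc2 _
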